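/- Let n be a natural number and a, b, c, d real numbers such that all Pochhammer symbols (c)_k, (d)_k, (1−a−n)_k, (c+d−a−b)_k are nonzero for 0 ≤ k ≤ n. Then ∑_{k=0}^n [(−n)_k (a)_k (b)_k]/[(c)_k (d)_k k!] = [(a)_n (c+d−a−b)_n]/[(c)_n (d)_n] · ∑_{k=0}^n [(−n)_k (c−a)_k (d−a)_k]/[(1−a−n)_k (c+d−a−b)_k k!]. -/

import Mathlib

/-- The Pochhammer symbol `(a)_k = a (a+1) ⋯ (a+k-1)` over ℝ. -/
noncomputable def poch (a : ℝ) (k : ℕ) : ℝ := (ascPochhammer ℝ k).eval a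

open Finset Topology Filter

lemma poch_zero (z : ℝ) : poch z 0 = 1 := by simp [poch]

lemma poch_succ (z : ℝ) (k : ℕ) : poch z (k+1) = poch z k * (z + k) := by
  simpa [poch] using ascPochhammer_succ_eval k z

lemma poch_prod (z : ℝ) (k : ℕ) : poch z k = ∏ i ∈ range k, (z + i) := by
  induction k with
  | zero => simp [poch_zero]
  | succ k ih => rw [poch_succ, ih, prod_range_succ]

lemma poch_one (z : ℝ) : poch z 1 = z := by simp [poch_prod]

lemma poch_add (z : ℝ) (i j : ℕ) : poch z (i+j) = poch z i * poch (z+i) j := by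
  rw [poch_prod, poch_prod, poch_prod, prod_range_add]
  congr 1
  refine prod_congr rfl fun m _ => ?_
  push_cast; ring

lemma poch_succ_left (z : ℝ) (k : ℕ) : poch z (k+1) = z * poch (z+1) k := by
  have h := poch_add z 1 k
  rw [add_comm 1 k] at h
  simpa [poch_one] using h

lemma poch_reflect (z : ℝ) (m : ℕ) : poch (1 - z - m) m = (-1)^m * poch z m := by
  rw [poch_prod, poch_prod]
  calc ∏ j ∈ range m, (1 - z - (m:ℝ) + j)
      = ∏ j ∈ range m, ((-1) * (z + ((m - 1 - j : ℕ):ℝ))) := by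
        refine prod_congr rfl fun j hj => ?_
        rw [mem_range] at hj
        have : ((m - 1 - j : ℕ) : ℝ) = (m:ℝ) - 1 - j := by
          rw [Nat.cast_sub (by omega), Nat.cast_sub (by omega)]; push_cast; ring
        rw [this]; ring
    _ = (-1)^m * ∏ j ∈ range m, (z + ((m - 1 - j:ℕ):ℝ)) := by
        rw [prod_mul_distrib, prod_const, card_range]
    _ = (-1)^m * ∏ j ∈ range m, (z + (j:ℝ)) := by
        rw [prod_range_reflect (fun j => z + (j:ℝ)) m]

lemma poch_ne_zero_iff (z : ℝ) (k : ℕ) : poch z k ≠ 0 ↔ ∀ i < k, z + i ≠ 0 := by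
  rw [poch_prod, Finset.prod_ne_zero_iff]
  exact ⟨fun h i hi => h i (mem_range.2 hi), fun h i hi => h i (mem_range.1 hi)⟩

lemma poch_neg_nat' (j m : ℕ) :
    poch (-((j+m : ℕ):ℝ)) j * (m.factorial : ℝ) = (-1)^j * ((j+m).factorial : ℝ) := by
  induction j generalizing m with
  | zero => simp [poch_zero]
  | succ j ih =>
    have key := ih (m+1)
    have harg : (-(((j+1)+m : ℕ)):ℝ) = -((j+(m+1) : ℕ):ℝ) := by push_cast; ring
    rw [poch_succ, harg]
    have h2 : ((m+1).factorial : ℝ) = (m+1) * m.factorial := by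
      rw [Nat.factorial_succ]; push_cast; ring
    rw [h2] at key
    have h3 : (-((j+(m+1):ℕ):ℝ) + j) = -((m:ℝ)+1) := by push_cast; ring
    calc poch (-((j+(m+1):ℕ):ℝ)) j * (-((j+(m+1):ℕ):ℝ) + j) * (m.factorial : ℝ)
        = -(poch (-((j+(m+1):ℕ):ℝ)) j * (((m:ℝ)+1) * m.factorial)) := by rw [h3]; ring
      _ = -((-1:ℝ)^j * ((j+(m+1)).factorial : ℝ)) := by rw [key]
      _ = (-1:ℝ)^(j+1) * (((j+1)+m).factorial : ℝ) := by
          rw [show (j+1)+m = j+(m+1) by omega]; ring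

lemma poch_neg_nat {j k : ℕ} (h : j ≤ k) :
    poch (-(k:ℝ)) j * ((k-j).factorial : ℝ) = (-1)^j * (k.factorial : ℝ) := by
  obtain ⟨m, rfl⟩ := Nat.exists_eq_add_of_le h
  simpa using poch_neg_nat' j m


lemma CV (k : ℕ) (x : ℝ) : ∀ y : ℝ,
    ∑ j ∈ range (k+1), (-1:ℝ)^j * (k.choose j : ℝ) * poch x j * poch (y+j) (k-j)
      = poch (y-x) k := by
  induction k with
  | zero => intro y; simp [poch_zero]
  | succ k ih =>
    intro y
    set F : ℕ → ℝ := fun j =>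
      (-1:ℝ)^j * ((k+1).choose j : ℝ) * poch x j * poch (y+j) (k+1-j) with hF
    set A : ℕ → ℝ := fun j =>
      (-1:ℝ)^j * (k.choose j : ℝ) * poch x j * poch (y+j) (k+1-j) with hA
    set B : ℕ → ℝ := fun j =>
      (-1:ℝ)^(j+1) * (k.choose j : ℝ) * poch x (j+1) * poch (y+j+1) (k-j) with hB
    have hFj : ∀ j, F (j+1) = B j + A (j+1) := by
      intro j
      simp only [hF, hA, hB]
      have h1 : y + ((j+1:ℕ):ℝ) = y + j + 1 := by push_cast; ring
      rw [Nat.choose_succ_succ, Nat.succ_sub_succ, h1]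
      push_cast; ring
    have hF0 : F 0 = A 0 := by simp [hF, hA]
    have hsumA : ∑ j ∈ range (k+2), A j = ∑ j ∈ range (k+1), A (j+1) + A 0 :=
      Finset.sum_range_succ' A (k+1)
    have hsumA2 : ∑ j ∈ range (k+2), A j = ∑ j ∈ range (k+1), A j := by
      rw [Finset.sum_range_succ]
      have : A (k+1) = 0 := by
        simp [hA, Nat.choose_eq_zero_of_lt (Nat.lt_succ_self k)]
      rw [this, add_zero]
    have hterm : ∀ j ∈ range (k+1), A j + B j
        = (y-x) * ((-1:ℝ)^j * (k.choose j : ℝ) * poch x j * poch ((y+1)+j) (k-j)) := by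
      intro j hj
      rw [mem_range] at hj
      have hle : j ≤ k := by omega
      simp only [hA, hB]
      rw [show k+1-j = (k-j)+1 from by omega, poch_succ_left (y+j) (k-j),
        poch_succ x j, show (y+1)+(j:ℝ) = y+(j:ℝ)+1 from by ring]
      ring
    calc ∑ j ∈ range (k+1+1), F j
        = ∑ j ∈ range (k+1), F (j+1) + F 0 := Finset.sum_range_succ' F (k+1)
      _ = ∑ j ∈ range (k+1), (B j + A (j+1)) + A 0 := by
          rw [hF0, sum_congr rfl (fun j _ => hFj j)]
      _ = ∑ j ∈ range (k+1), B j + (∑ j ∈ range (k+1), A (j+1) + A 0) := by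
          rw [Finset.sum_add_distrib]; ring
      _ = ∑ j ∈ range (k+1), B j + ∑ j ∈ range (k+1), A j := by
          rw [← hsumA, hsumA2]
      _ = ∑ j ∈ range (k+1), (A j + B j) := by rw [Finset.sum_add_distrib]; ring
      _ = (y-x) * ∑ j ∈ range (k+1), ((-1:ℝ)^j * (k.choose j : ℝ) * poch x j * poch ((y+1)+j) (k-j)) := by
          rw [sum_congr rfl hterm, Finset.mul_sum]
      _ = (y-x) * poch ((y+1)-x) k := by rw [ih (y+1)]
      _ = poch (y-x) (k+1) := by
          rw [poch_succ_left (y-x) k, show (y+1)-x = (y-x)+1 from by ring]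


lemma poch_neg_nat_eq {j k : ℕ} (h : j ≤ k) :
    poch (-(k:ℝ)) j = (-1)^j * (k.factorial : ℝ) / ((k-j).factorial : ℝ) := by
  have hf : ((k-j).factorial : ℝ) ≠ 0 := Nat.cast_ne_zero.2 (Nat.factorial_ne_zero _)
  field_simp
  exact poch_neg_nat h

lemma CV' (N : ℕ) (z w : ℝ) (hw : ∀ m ≤ N, poch w m ≠ 0) :
    ∑ m ∈ range (N+1), poch (-(N:ℝ)) m * poch z m / (poch w m * (m.factorial:ℝ))
      = poch (w-z) N / poch w N := by
  rw [← CV N z w, Finset.sum_div]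
  refine sum_congr rfl fun m hm => ?_
  rw [mem_range] at hm
  have hmN : m ≤ N := by omega
  have h1 : poch w m ≠ 0 := hw m hmN
  have h2 : poch w N ≠ 0 := hw N le_rfl
  have hmf : ((m.factorial : ℝ)) ≠ 0 := Nat.cast_ne_zero.2 (Nat.factorial_ne_zero _)
  have hsplit : poch w N = poch w m * poch (w+m) (N-m) := by
    rw [← poch_add]; congr 1; omega
  have hpm : poch (w+(m:ℝ)) (N-m) ≠ 0 := by
    intro h0; exact h2 (by rw [hsplit, h0, mul_zero])
  have e : poch (-(N:ℝ)) m = (-1)^m * ((N.choose m : ℝ)) * (m.factorial : ℝ) := by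
    have hC : ((N.choose m : ℝ)) * (m.factorial:ℝ) * ((N-m).factorial:ℝ) = (N.factorial:ℝ) := by
      exact_mod_cast congrArg (Nat.cast : ℕ → ℝ) (Nat.choose_mul_factorial_mul_factorial hmN)
    have hf : ((N-m).factorial : ℝ) ≠ 0 := Nat.cast_ne_zero.2 (Nat.factorial_ne_zero _)
    have := poch_neg_nat hmN
    apply mul_right_cancel₀ hf
    rw [this, ← hC]; ring
  rw [div_eq_div_iff (mul_ne_zero h1 hmf) h2, e, hsplit]
  ring

lemma poch_split_reflect (s : ℝ) (n j : ℕ) (h : j ≤ n) :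
    poch s n = (-1)^j * poch s (n-j) * poch (1-s-n) j := by
  have h1 : poch s n = poch s (n-j) * poch (s + ((n-j:ℕ):ℝ)) j := by
    rw [← poch_add]; congr 1; omega
  have h2 := poch_reflect (s + ((n-j:ℕ):ℝ)) j
  have harg : 1 - (s + ((n-j:ℕ):ℝ)) - (j:ℝ) = 1 - s - n := by
    rw [Nat.cast_sub h]; ring
  rw [harg] at h2
  have h3 : poch (s + ((n-j:ℕ):ℝ)) j = (-1)^j * poch (1-s-(n:ℝ)) j := by
    rw [h2, ← mul_assoc, ← mul_pow]; norm_num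
  rw [h1, h3]; ring

lemma T (n : ℕ) (x y u v : ℝ)
    (hu : ∀ k ≤ n, poch u k ≠ 0) (hv : ∀ k ≤ n, poch v k ≠ 0)
    (hw : ∀ k ≤ n, poch (1+x-u-(n:ℝ)) k ≠ 0) :
    ∑ k ∈ range (n+1), poch (-(n:ℝ)) k * poch x k * poch y k /
        (poch u k * poch v k * (k.factorial:ℝ))
      = poch (u-x) n / poch u n *
        ∑ k ∈ range (n+1), poch (-(n:ℝ)) k * poch x k * poch (v-y) k /
          (poch v k * poch (1+x-u-(n:ℝ)) k * (k.factorial:ℝ)) := by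
  set f : ℕ → ℕ → ℝ := fun k j => poch (-(n:ℝ)) k * poch x k / (poch u k * (k.factorial:ℝ)) *
      (poch (-(k:ℝ)) j * poch (v-y) j / (poch v j * (j.factorial:ℝ))) with hf
  have step1 : ∀ k ∈ range (n+1),
      poch (-(n:ℝ)) k * poch x k * poch y k / (poch u k * poch v k * (k.factorial:ℝ))
        = ∑ j ∈ range (k+1), f k j := by
    intro k hk
    rw [mem_range] at hk
    have hk' : k ≤ n := by omega
    have hCV := CV' k (v-y) v (fun m hm => hv m (le_trans hm hk'))
    rw [show v-(v-y) = y from by ring] at hCV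
    simp only [hf]
    rw [← Finset.mul_sum, hCV]
    have h1 : poch u k ≠ 0 := hu k hk'
    have h2 : poch v k ≠ 0 := hv k hk'
    have h3 : ((k.factorial : ℝ)) ≠ 0 := Nat.cast_ne_zero.2 (Nat.factorial_ne_zero _)
    field_simp
  have swap : ∑ k ∈ range (n+1), ∑ j ∈ range (k+1), f k j
      = ∑ j ∈ range (n+1), ∑ k ∈ Ico j (n+1), f k j := by
    refine Finset.sum_comm' ?_
    intro k j
    simp only [mem_range, mem_Ico]
    omega
  have inner : ∀ j ∈ range (n+1), ∑ k ∈ Ico j (n+1), f k j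
      = poch (u-x) n / poch u n *
        (poch (-(n:ℝ)) j * poch x j * poch (v-y) j /
          (poch v j * poch (1+x-u-(n:ℝ)) j * (j.factorial:ℝ))) := by
    intro j hj
    rw [mem_range] at hj
    have hj' : j ≤ n := by omega
    set Cj : ℝ := poch (-(n:ℝ)) j * poch x j * poch (v-y) j * (-1:ℝ)^j /
        (poch u j * poch v j * (j.factorial:ℝ)) with hCj
    have husplit : ∀ m, poch u (j+m) = poch u j * poch (u+j) m := fun m => poch_add u j m
    have termwise : ∀ m ∈ range (n-j+1), f (j+m) j
        = Cj * (poch (-((n-j:ℕ):ℝ)) m * poch (x+j) m / (poch (u+(j:ℝ)) m * (m.factorial:ℝ))) := by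
      intro m hm
      rw [mem_range] at hm
      have hmn : j + m ≤ n := by omega
      simp only [hf, hCj]
      have e1 : poch (-(n:ℝ)) (j+m) = poch (-(n:ℝ)) j * poch (-((n-j:ℕ):ℝ)) m := by
        rw [poch_add]; congr 2
        rw [Nat.cast_sub hj']; ring
      have e2 : poch x (j+m) = poch x j * poch (x+j) m := poch_add x j m
      have e3 : poch u (j+m) = poch u j * poch (u+j) m := husplit m
      have e4 : poch (-((j+m:ℕ):ℝ)) j = (-1)^j * ((j+m).factorial : ℝ) / (m.factorial : ℝ) := by
        have := poch_neg_nat_eq (show j ≤ j+m by omega)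
        rwa [show j+m-j = m from by omega] at this
      have hcast : (-((j:ℝ)+(m:ℝ))) = (-(((j+m:ℕ)):ℝ)) := by push_cast; ring
      rw [Nat.cast_add] at e4 ⊢
      rw [e1, e2, e3, e4]
      have n1 : poch u j ≠ 0 := hu j hj'
      have n2 : poch (u+(j:ℝ)) m ≠ 0 := by
        intro h0
        exact hu (j+m) hmn (by rw [e3, h0, mul_zero])
      have n3 : poch v j ≠ 0 := hv j hj'
      have n4 : ((j.factorial:ℝ)) ≠ 0 := Nat.cast_ne_zero.2 (Nat.factorial_ne_zero _)
      have n5 : ((m.factorial:ℝ)) ≠ 0 := Nat.cast_ne_zero.2 (Nat.factorial_ne_zero _)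
      have n6 : (((j+m).factorial:ℝ)) ≠ 0 := Nat.cast_ne_zero.2 (Nat.factorial_ne_zero _)
      have hjm : ((j+m).factorial : ℝ) = (((j+m).factorial : ℕ) : ℝ) := rfl
      field_simp
    rw [Finset.sum_Ico_eq_sum_range, show n+1-j = (n-j)+1 from by omega,
      sum_congr rfl (fun m hm => termwise m (by simpa using hm)), ← Finset.mul_sum]
    have hCVin : ∑ m ∈ range ((n-j)+1),
        poch (-((n-j:ℕ):ℝ)) m * poch (x+j) m / (poch (u+(j:ℝ)) m * (m.factorial:ℝ))
          = poch ((u+(j:ℝ))-(x+(j:ℝ))) (n-j) / poch (u+(j:ℝ)) (n-j) := by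
      refine CV' (n-j) (x+j) (u+j) ?_
      intro m hm
      intro h0
      exact hu (j+m) (by omega) (by rw [husplit m, h0, mul_zero])
    rw [hCVin, show (u+(j:ℝ))-(x+(j:ℝ)) = u-x from by ring]
    -- now algebra: Cj * (poch (u-x) (n-j) / poch (u+j) (n-j)) = target
    have hun : poch u n = poch u j * poch (u+(j:ℝ)) (n-j) := by
      rw [← poch_add]; congr 1; omega
    have hux : poch (u-x) n = (-1)^j * poch (u-x) (n-j) * poch (1+x-u-(n:ℝ)) j := by
      have := poch_split_reflect (u-x) n j hj'
      rwa [show (1:ℝ)-(u-x)-(n:ℝ) = 1+x-u-(n:ℝ) from by ring] at this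
    have n1 : poch u j ≠ 0 := hu j hj'
    have n2 : poch (u+(j:ℝ)) (n-j) ≠ 0 := by
      intro h0; exact hu n le_rfl (by rw [hun, h0, mul_zero])
    have n3 : poch v j ≠ 0 := hv j hj'
    have n4 : ((j.factorial:ℝ)) ≠ 0 := Nat.cast_ne_zero.2 (Nat.factorial_ne_zero _)
    have n5 : poch (1+x-u-(n:ℝ)) j ≠ 0 := hw j hj'
    rw [hCj, hun, hux]
    field_simp
  rw [sum_congr rfl step1, swap, sum_congr rfl inner, ← Finset.mul_sum]

theorem thomae_generic (n : ℕ) (a b c d : ℝ)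
    (hc : ∀ k ≤ n, poch c k ≠ 0) (hd : ∀ k ≤ n, poch d k ≠ 0)
    (h1 : ∀ k ≤ n, poch (1 - a - n) k ≠ 0)
    (h2 : ∀ k ≤ n, poch (c + d - a - b) k ≠ 0)
    (h3 : ∀ k ≤ n, poch (1 + a - c - (n:ℝ)) k ≠ 0) :
    ∑ k ∈ Finset.range (n + 1),
        (poch (-(n : ℝ)) k * poch a k * poch b k) /
          (poch c k * poch d k * (k.factorial : ℝ)) =
      (poch a n * poch (c + d - a - b) n) / (poch c n * poch d n) *
        ∑ k ∈ Finset.range (n + 1),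
          (poch (-(n : ℝ)) k * poch (c - a) k * poch (d - a) k) /
            (poch (1 - a - n) k * poch (c + d - a - b) k * (k.factorial : ℝ)) := by
  have h2' : ∀ k ≤ n, poch (1+(d-b)-(1+a-c-(n:ℝ))-(n:ℝ)) k ≠ 0 := by
    intro k hk
    rw [show (1+(d-b)-(1+a-c-(n:ℝ))-(n:ℝ)) = c+d-a-b from by ring]
    exact h2 k hk
  have h1' : ∀ k ≤ n, poch (1+(d-a)-d-(n:ℝ)) k ≠ 0 := by
    intro k hk
    rw [show (1+(d-a)-d-(n:ℝ)) = 1-a-(n:ℝ) from by ring]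
    exact h1 k hk
  have hA := T n a b c d hc hd h3
  have hB := T n (d-b) a (1+a-c-(n:ℝ)) d h3 hd h2'
  have hC := T n (d-a) (d-b) d (c+d-a-b) hd h2 h1'
  rw [show (1+(d-b)-(1+a-c-(n:ℝ))-(n:ℝ)) = c+d-a-b from by ring] at hB
  rw [show (c+d-a-b)-(d-b) = c-a from by ring,
      show (1+(d-a)-d-(n:ℝ)) = 1-a-(n:ℝ) from by ring] at hC
  have eAB : ∑ k ∈ range (n+1), poch (-(n:ℝ)) k * poch a k * poch (d-b) k /
        (poch d k * poch (1+a-c-(n:ℝ)) k * (k.factorial:ℝ))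
      = ∑ k ∈ range (n+1), poch (-(n:ℝ)) k * poch (d-b) k * poch a k /
        (poch (1+a-c-(n:ℝ)) k * poch d k * (k.factorial:ℝ)) :=
    sum_congr rfl fun k _ => by ring
  have eBC : ∑ k ∈ range (n+1), poch (-(n:ℝ)) k * poch (d-b) k * poch (d-a) k /
        (poch d k * poch (c+d-a-b) k * (k.factorial:ℝ))
      = ∑ k ∈ range (n+1), poch (-(n:ℝ)) k * poch (d-a) k * poch (d-b) k /
        (poch d k * poch (c+d-a-b) k * (k.factorial:ℝ)) :=
    sum_congr rfl fun k _ => by ring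
  have eCT : ∑ k ∈ range (n+1), poch (-(n:ℝ)) k * poch (d-a) k * poch (c-a) k /
        (poch (c+d-a-b) k * poch (1-a-(n:ℝ)) k * (k.factorial:ℝ))
      = ∑ k ∈ range (n+1), poch (-(n:ℝ)) k * poch (c-a) k * poch (d-a) k /
        (poch (1-a-(n:ℝ)) k * poch (c+d-a-b) k * (k.factorial:ℝ)) :=
    sum_congr rfl fun k _ => by ring
  have hpre : poch (c-a) n / poch c n * (poch ((1+a-c-(n:ℝ))-(d-b)) n / poch (1+a-c-(n:ℝ)) n)
        * (poch (d-(d-a)) n / poch d n)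
      = poch a n * poch (c+d-a-b) n / (poch c n * poch d n) := by
    have r1 : poch ((1+a-c-(n:ℝ))-(d-b)) n = (-1)^n * poch (c+d-a-b) n := by
      rw [show ((1+a-c-(n:ℝ))-(d-b)) = 1-(c+d-a-b)-(n:ℝ) from by ring]
      exact poch_reflect _ n
    have r2 : poch (1+a-c-(n:ℝ)) n = (-1)^n * poch (c-a) n := by
      rw [show (1+a-c-(n:ℝ)) = 1-(c-a)-(n:ℝ) from by ring]
      exact poch_reflect _ n
    have r3 : d-(d-a) = a := by ring
    have nca : poch (c-a) n ≠ 0 := by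
      intro h0; exact h3 n le_rfl (by rw [r2, h0, mul_zero])
    have n1 : poch c n ≠ 0 := hc n le_rfl
    have n2 : poch d n ≠ 0 := hd n le_rfl
    have nm : ((-1:ℝ))^n ≠ 0 := pow_ne_zero _ (by norm_num)
    rw [r1, r2, r3]
    field_simp
  calc ∑ k ∈ Finset.range (n + 1),
        (poch (-(n : ℝ)) k * poch a k * poch b k) /
          (poch c k * poch d k * (k.factorial : ℝ))
      = poch (c-a) n / poch c n * (∑ k ∈ range (n+1), poch (-(n:ℝ)) k * poch a k * poch (d-b) k /
          (poch d k * poch (1+a-c-(n:ℝ)) k * (k.factorial:ℝ))) := hA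
    _ = poch (c-a) n / poch c n * ((poch ((1+a-c-(n:ℝ))-(d-b)) n / poch (1+a-c-(n:ℝ)) n) *
          (∑ k ∈ range (n+1), poch (-(n:ℝ)) k * poch (d-b) k * poch (d-a) k /
            (poch d k * poch (c+d-a-b) k * (k.factorial:ℝ)))) := by rw [eAB, hB]
    _ = poch (c-a) n / poch c n * ((poch ((1+a-c-(n:ℝ))-(d-b)) n / poch (1+a-c-(n:ℝ)) n) *
          ((poch (d-(d-a)) n / poch d n) *
            (∑ k ∈ range (n+1), poch (-(n:ℝ)) k * poch (d-a) k * poch (c-a) k /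
              (poch (c+d-a-b) k * poch (1-a-(n:ℝ)) k * (k.factorial:ℝ))))) := by rw [eBC, hC]
    _ = (poch (c-a) n / poch c n * (poch ((1+a-c-(n:ℝ))-(d-b)) n / poch (1+a-c-(n:ℝ)) n)
          * (poch (d-(d-a)) n / poch d n)) *
          (∑ k ∈ range (n+1), poch (-(n:ℝ)) k * poch (c-a) k * poch (d-a) k /
            (poch (1-a-(n:ℝ)) k * poch (c+d-a-b) k * (k.factorial:ℝ))) := by rw [eCT]; ring
    _ = (poch a n * poch (c+d-a-b) n) / (poch c n * poch d n) *
          ∑ k ∈ Finset.range (n + 1),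
            (poch (-(n : ℝ)) k * poch (c - a) k * poch (d - a) k) /
              (poch (1 - a - n) k * poch (c + d - a - b) k * (k.factorial : ℝ)) := by rw [hpre]

theorem thomae_A2 (n : ℕ) (a b c d : ℝ)
    (hc : ∀ k ≤ n, poch c k ≠ 0) (hd : ∀ k ≤ n, poch d k ≠ 0)
    (h1 : ∀ k ≤ n, poch (1 - a - n) k ≠ 0)
    (h2 : ∀ k ≤ n, poch (c + d - a - b) k ≠ 0) :
    ∑ k ∈ Finset.range (n + 1),
        (poch (-(n : ℝ)) k * poch a k * poch b k) /
          (poch c k * poch d k * (k.factorial : ℝ)) =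
      (poch a n * poch (c + d - a - b) n) / (poch c n * poch d n) *
        ∑ k ∈ Finset.range (n + 1),
          (poch (-(n : ℝ)) k * poch (c - a) k * poch (d - a) k) /
            (poch (1 - a - n) k * poch (c + d - a - b) k * (k.factorial : ℝ)) := by
  set F : ℝ → ℝ := fun t => ∑ k ∈ Finset.range (n + 1),
      (poch (-(n : ℝ)) k * poch a k * poch b k) /
        (poch (c+t) k * poch d k * (k.factorial : ℝ)) with hF
  set G : ℝ → ℝ := fun t => (poch a n * poch (c+t+d-a-b) n) / (poch (c+t) n * poch d n) *
      ∑ k ∈ Finset.range (n + 1),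
        (poch (-(n : ℝ)) k * poch (c+t-a) k * poch (d - a) k) /
          (poch (1 - a - n) k * poch (c+t+d-a-b) k * (k.factorial : ℝ)) with hG
  suffices h : F 0 = G 0 by
    simp only [hF, hG, add_zero] at h
    exact h
  classical
  set B : Finset ℝ := (((Finset.range (n+1)).image fun i : ℕ => -(c+(i:ℝ))) ∪
      ((Finset.range (n+1)).image fun i : ℕ => -(c+d-a-b+(i:ℝ)))) ∪
      ((Finset.range (n+1)).image fun i : ℕ => (1+a-c-(n:ℝ)+(i:ℝ))) with hB
  have key : ∀ t : ℝ, t ∉ B → F t = G t := by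
    intro t ht
    simp only [hB, Finset.mem_union, Finset.mem_image, Finset.mem_range, not_or] at ht
    push_neg at ht
    obtain ⟨⟨ht1, ht2⟩, ht3⟩ := ht
    have hct : ∀ k ≤ n, poch (c+t) k ≠ 0 := by
      intro k hk
      rw [poch_ne_zero_iff]
      intro i hik h0
      exact ht1 i (by omega) (by linarith)
    have hcd : ∀ k ≤ n, poch (c+t+d-a-b) k ≠ 0 := by
      intro k hk
      rw [poch_ne_zero_iff]
      intro i hik h0
      exact ht2 i (by omega) (by linarith)
    have h3t : ∀ k ≤ n, poch (1+a-(c+t)-(n:ℝ)) k ≠ 0 := by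
      intro k hk
      rw [poch_ne_zero_iff]
      intro i hik h0
      exact ht3 i (by omega) (by linarith)
    exact thomae_generic n a b (c+t) d hct hd h1 hcd h3t
  have contP : ∀ (φ : ℝ → ℝ), Continuous φ → ∀ k : ℕ, Continuous fun t => poch (φ t) k := by
    intro φ hφ k
    exact ((ascPochhammer ℝ k).continuous).comp hφ
  have hcont1 : Continuous fun t : ℝ => c + t := continuous_const.add continuous_id
  have hcont2 : Continuous fun t : ℝ => c + t + d - a - b :=
    ((hcont1.add continuous_const).sub continuous_const).sub continuous_const
  have hcont3 : Continuous fun t : ℝ => c + t - a := hcont1.sub continuous_const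
  have kfac : ∀ k : ℕ, ((k.factorial : ℝ)) ≠ 0 :=
    fun k => Nat.cast_ne_zero.2 (Nat.factorial_ne_zero _)
  have contF : ContinuousAt F 0 := by
    apply tendsto_finset_sum
    intro k hk
    rw [Finset.mem_range] at hk
    have hk' : k ≤ n := by omega
    refine ContinuousAt.div continuousAt_const
      (((contP _ hcont1 k).mul continuous_const).mul continuous_const).continuousAt ?_
    simp only [add_zero]
    exact mul_ne_zero (mul_ne_zero (hc k hk') (hd k hk')) (kfac k)
  have contG : ContinuousAt G 0 := by
    refine ContinuousAt.mul ?_ ?_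
    · refine ContinuousAt.div
        (continuousAt_const.mul (contP _ hcont2 n).continuousAt)
        ((contP _ hcont1 n).mul continuous_const).continuousAt ?_
      simp only [add_zero]
      exact mul_ne_zero (hc n le_rfl) (hd n le_rfl)
    · apply tendsto_finset_sum
      intro k hk
      rw [Finset.mem_range] at hk
      have hk' : k ≤ n := by omega
      refine ContinuousAt.div
        ((continuousAt_const.mul (contP _ hcont3 k).continuousAt).mul continuousAt_const)
        ((continuousAt_const.mul (contP _ hcont2 k).continuousAt).mul continuousAt_const) ?_
      simp only [add_zero]
      exact mul_ne_zero (mul_ne_zero (h1 k hk') (h2 k hk')) (kfac k)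
  have hEv : F =ᶠ[𝓝[≠] (0:ℝ)] G := by
    have hBfin : ((B : Set ℝ) \ {0}).Finite := (B.finite_toSet).diff
    have hopen : IsOpen (((B : Set ℝ) \ {0})ᶜ) := hBfin.isClosed.isOpen_compl
    have h0mem : (0:ℝ) ∈ (((B : Set ℝ) \ {0})ᶜ) := by simp
    have hmem : (((B : Set ℝ) \ {0})ᶜ) ∈ 𝓝 (0:ℝ) := hopen.mem_nhds h0mem
    filter_upwards [mem_nhdsWithin_of_mem_nhds hmem, self_mem_nhdsWithin] with t ht ht0
    apply key
    intro htB
    exact ht ⟨htB, ht0⟩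
  have l1 : Filter.Tendsto F (𝓝[≠] (0:ℝ)) (𝓝 (F 0)) :=
    contF.tendsto.mono_left nhdsWithin_le_nhds
  have l2 : Filter.Tendsto G (𝓝[≠] (0:ℝ)) (𝓝 (G 0)) :=
    contG.tendsto.mono_left nhdsWithin_le_nhds
  exact tendsto_nhds_unique (l1.congr' hEv) l2
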